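/- Let x : I × J → ℝ^m be a matrix of vectors, w a weight matrix, and let F : ℝ^m → ℝ be concave on the convex hull of the entries {x_{ij}}. Then: (a) C_W(F) ≥ E_W(F) and R_W(F) ≥ E_W(F); (b) if x is W-column-constant then C_W(F) = E_W(F), and if x is W-row-constant then R_W(F) = E_W(F); (c) if G : ℝ^m → ℝ is strictly concave on the convex hull of the entries, then C_W(G) = E_W(G) if and only if x is W-column-constant, and R_W(G) = E_W(G) if and only if x is W-row-constant. -/
import Mathlib


open scoped BigOperators Classical

set_option linter.unusedSectionVars false
set_option linter.unusedVariables false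

noncomputable section

variable {I J : Type*} [Fintype I] [Fintype J] {m : ℕ}

/-- Row marginal `w_{i·}`. -/
def rowMarg (w : I → J → ℝ) (i : I) : ℝ := ∑ j, w i j

/-- Column marginal `w_{·j}`. -/
def colMarg (w : I → J → ℝ) (j : J) : ℝ := ∑ i, w i j

/-- Row average `r_i`. -/
def rowAvg (x : I → J → EuclideanSpace ℝ (Fin m)) (w : I → J → ℝ) (i : I) :
    EuclideanSpace ℝ (Fin m) := (rowMarg w i)⁻¹ • ∑ j, w i j • x i j

/-- Column average `c_j`. -/
def colAvg (x : I → J → EuclideanSpace ℝ (Fin m)) (w : I → J → ℝ) (j : J) :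
    EuclideanSpace ℝ (Fin m) := (colMarg w j)⁻¹ • ∑ i, w i j • x i j

/-- `E_W(F)`, the overall weighted average of `F` on the entries. -/
def EW (x : I → J → EuclideanSpace ℝ (Fin m)) (w : I → J → ℝ)
    (F : EuclideanSpace ℝ (Fin m) → ℝ) : ℝ := ∑ i, ∑ j, w i j * F (x i j)

/-- `R_W(F)`, the weighted average of `F` on the row averages. -/
def RW (x : I → J → EuclideanSpace ℝ (Fin m)) (w : I → J → ℝ)
    (F : EuclideanSpace ℝ (Fin m) → ℝ) : ℝ :=
  ∑ i ∈ Finset.univ.filter (fun i => 0 < rowMarg w i), rowMarg w i * F (rowAvg x w i)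

/-- `C_W(F)`, the weighted average of `F` on the column averages. -/
def CW (x : I → J → EuclideanSpace ℝ (Fin m)) (w : I → J → ℝ)
    (F : EuclideanSpace ℝ (Fin m) → ℝ) : ℝ :=
  ∑ j ∈ Finset.univ.filter (fun j => 0 < colMarg w j), colMarg w j * F (colAvg x w j)

/-- `w` is a weight matrix. -/
def IsWeight (w : I → J → ℝ) : Prop := (∀ i j, 0 ≤ w i j) ∧ ∑ i, ∑ j, w i j = 1

/-- The set of entries of the matrix `x`. -/
def entries (x : I → J → EuclideanSpace ℝ (Fin m)) : Set (EuclideanSpace ℝ (Fin m)) :=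
  {v | ∃ i j, x i j = v}

/-- `x` is `W`-column-constant. -/
def WColConst (x : I → J → EuclideanSpace ℝ (Fin m)) (w : I → J → ℝ) : Prop :=
  ∀ i i' j, 0 < w i j → 0 < w i' j → x i j = x i' j

/-- `x` is `W`-row-constant. -/
def WRowConst (x : I → J → EuclideanSpace ℝ (Fin m)) (w : I → J → ℝ) : Prop :=
  ∀ i j j', 0 < w i j → 0 < w i j' → x i j = x i j'

section Aux

variable (x : I → J → EuclideanSpace ℝ (Fin m)) (w : I → J → ℝ)
  (F : EuclideanSpace ℝ (Fin m) → ℝ)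

lemma colS_zero (hw0 : ∀ i j, 0 ≤ w i j) {j : J} (hj : ¬ 0 < colMarg w j) :
    ∑ i, w i j * F (x i j) = 0 := by
  have hM : colMarg w j = 0 :=
    le_antisymm (not_lt.1 hj) (Finset.sum_nonneg fun i _ => hw0 i j)
  refine Finset.sum_eq_zero fun i _ => ?_
  have : w i j = 0 :=
    (Finset.sum_eq_zero_iff_of_nonneg (fun i _ => hw0 i j)).1 hM i (Finset.mem_univ i)
  simp [this]

lemma EW_eq_filter (hw0 : ∀ i j, 0 ≤ w i j) :
    EW x w F = ∑ j ∈ Finset.univ.filter (fun j => 0 < colMarg w j),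
      ∑ i, w i j * F (x i j) := by
  rw [EW, Finset.sum_comm]
  exact (Finset.sum_subset (Finset.filter_subset _ _)
    (fun j _ hj => colS_zero x w F hw0 (by simpa using hj))).symm

lemma colAvg_eq {j : J} :
    ∑ i, (w i j / colMarg w j) • x i j = colAvg x w j := by
  rw [colAvg, Finset.smul_sum]
  exact Finset.sum_congr rfl fun i _ => by rw [smul_smul, div_eq_inv_mul]

lemma col_weights_sum {j : J} (hj : 0 < colMarg w j) :
    ∑ i, w i j / colMarg w j = 1 := by
  rw [← Finset.sum_div, ← colMarg, div_self hj.ne']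

lemma col_jensen (hw0 : ∀ i j, 0 ≤ w i j)
    (hF : ConcaveOn ℝ (convexHull ℝ (entries x)) F) {j : J} (hj : 0 < colMarg w j) :
    ∑ i, w i j * F (x i j) ≤ colMarg w j * F (colAvg x w j) := by
  have hmem : ∀ i ∈ Finset.univ, x i j ∈ convexHull ℝ (entries x) :=
    fun i _ => subset_convexHull ℝ _ ⟨i, j, rfl⟩
  have h := hF.le_map_sum (fun i _ => div_nonneg (hw0 i j) hj.le)
    (col_weights_sum w hj) hmem
  rw [colAvg_eq x w] at h
  have h2 := mul_le_mul_of_nonneg_left h hj.le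
  calc ∑ i, w i j * F (x i j)
      = colMarg w j * ∑ i, (w i j / colMarg w j) • F (x i j) := by
        rw [Finset.mul_sum]
        refine Finset.sum_congr rfl fun i _ => ?_
        rw [smul_eq_mul]; field_simp
    _ ≤ colMarg w j * F (colAvg x w j) := h2

lemma col_const_eq (hw0 : ∀ i j, 0 ≤ w i j) {j : J}
    (hc : ∀ i i', 0 < w i j → 0 < w i' j → x i j = x i' j)
    (hj : 0 < colMarg w j) :
    colMarg w j * F (colAvg x w j) = ∑ i, w i j * F (x i j) := by
  obtain ⟨i₀, -, hi₀⟩ := Finset.exists_lt_of_sum_lt (f := fun _ : I => (0:ℝ))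
    (g := fun i => w i j) (by simpa [colMarg] using hj)
  have hxc : ∀ i, 0 < w i j → x i j = x i₀ j := fun i hi => hc i i₀ hi hi₀
  have havg : colAvg x w j = x i₀ j := by
    rw [colAvg]
    have : ∑ i, w i j • x i j = colMarg w j • x i₀ j := by
      rw [colMarg, Finset.sum_smul]
      refine Finset.sum_congr rfl fun i _ => ?_
      rcases (hw0 i j).lt_or_eq with h | h
      · rw [hxc i h]
      · simp [← h]
    rw [this, smul_smul, inv_mul_cancel₀ hj.ne', one_smul]
  rw [havg]
  have : ∑ i, w i j * F (x i j) = ∑ i, w i j * F (x i₀ j) := by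
    refine Finset.sum_congr rfl fun i _ => ?_
    rcases (hw0 i j).lt_or_eq with h | h
    · rw [hxc i h]
    · simp [← h]
  rw [this, ← Finset.sum_mul, ← colMarg]

lemma col_eq_const (hw0 : ∀ i j, 0 ≤ w i j)
    (hF : StrictConcaveOn ℝ (convexHull ℝ (entries x)) F) {j : J}
    (hj : 0 < colMarg w j)
    (heq : colMarg w j * F (colAvg x w j) = ∑ i, w i j * F (x i j)) :
    ∀ i i', 0 < w i j → 0 < w i' j → x i j = x i' j := by
  have hsum : ∑ i, w i j / colMarg w j = 1 := col_weights_sum w hj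
  have hmem : ∀ i ∈ Finset.univ, x i j ∈ convexHull ℝ (entries x) :=
    fun i _ => subset_convexHull ℝ _ ⟨i, j, rfl⟩
  have hFeq : F (∑ i, (w i j / colMarg w j) • x i j)
      = ∑ i, (w i j / colMarg w j) • F (x i j) := by
    rw [colAvg_eq x w]
    have : F (colAvg x w j) = (colMarg w j)⁻¹ * ∑ i, w i j * F (x i j) := by
      rw [← heq, ← mul_assoc, inv_mul_cancel₀ hj.ne', one_mul]
    rw [this, Finset.mul_sum]
    exact Finset.sum_congr rfl fun i _ => by rw [smul_eq_mul]; ring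
  have key := (hF.map_sum_eq_iff' (fun i _ => div_nonneg (hw0 i j) hj.le) hsum hmem).1 hFeq
  intro i i' hi hi'
  have h1 := key i (Finset.mem_univ i) (by positivity)
  have h2 := key i' (Finset.mem_univ i') (by positivity)
  rw [h1, h2]

/-- Combined column lemma. -/
lemma col_main (hw0 : ∀ i j, 0 ≤ w i j) :
    (ConcaveOn ℝ (convexHull ℝ (entries x)) F → EW x w F ≤ CW x w F) ∧
    (WColConst x w → CW x w F = EW x w F) ∧
    (StrictConcaveOn ℝ (convexHull ℝ (entries x)) F →
      CW x w F = EW x w F → WColConst x w) := by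
  refine ⟨fun hF => ?_, fun hc => ?_, fun hF heq => ?_⟩
  · rw [EW_eq_filter x w F hw0, CW]
    exact Finset.sum_le_sum fun j hj =>
      col_jensen x w F hw0 hF (by simpa using (Finset.mem_filter.1 hj).2)
  · rw [EW_eq_filter x w F hw0, CW]
    exact Finset.sum_congr rfl fun j hj =>
      col_const_eq x w F hw0 (fun i i' => hc i i' j)
        (by simpa using (Finset.mem_filter.1 hj).2)
  · intro i i' j hi hi'
    have hj : 0 < colMarg w j :=
      lt_of_lt_of_le hi (Finset.single_le_sum (fun i _ => hw0 i j) (Finset.mem_univ i))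
    have hjmem : j ∈ Finset.univ.filter (fun j => 0 < colMarg w j) := by
      simp [hj]
    -- each term of CW - EW (over the filter) is nonneg and they sum to 0
    have hzero : ∀ j' ∈ Finset.univ.filter (fun j => 0 < colMarg w j),
        colMarg w j' * F (colAvg x w j') - ∑ i, w i j' * F (x i j') = 0 := by
      have hsum0 : ∑ j' ∈ Finset.univ.filter (fun j => 0 < colMarg w j),
          (colMarg w j' * F (colAvg x w j') - ∑ i, w i j' * F (x i j')) = 0 := by
        rw [Finset.sum_sub_distrib, ← CW, ← EW_eq_filter x w F hw0, heq, sub_self]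
      intro j' hj'
      refine (Finset.sum_eq_zero_iff_of_nonneg fun j'' hj'' => ?_).1 hsum0 j' hj'
      have := col_jensen x w F hw0 hF.concaveOn
        (j := j'') (by simpa using (Finset.mem_filter.1 hj'').2)
      linarith
    have := hzero j hjmem
    exact col_eq_const x w F hw0 hF hj (by linarith) i i' hi hi'

lemma entries_transpose :
    entries (fun j i => x i j) = entries x := by
  ext v; constructor
  · rintro ⟨j, i, rfl⟩; exact ⟨i, j, rfl⟩
  · rintro ⟨i, j, rfl⟩; exact ⟨j, i, rfl⟩

lemma EW_transpose :
    EW (fun j i => x i j) (fun j i => w i j) F = EW x w F := by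
  rw [EW, EW, Finset.sum_comm]

lemma RW_transpose :
    CW (fun j i => x i j) (fun j i => w i j) F = RW x w F := rfl

lemma WColConst_transpose :
    WColConst (fun j i => x i j) (fun j i => w i j) ↔ WRowConst x w := by
  constructor
  · intro h i j j' hj hj'; exact h j j' i hj hj'
  · intro h j j' i hj hj'; exact h i j j' hj hj'

end Aux

/-- (a) `C_W(F) ≥ E_W(F)` and `R_W(F) ≥ E_W(F)` for concave `F`;
(b) if `x` is `W`-column-constant then `C_W(F) = E_W(F)`, and if `x` is
`W`-row-constant then `R_W(F) = E_W(F)`;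
(c) for strictly concave `G`, `C_W(G) = E_W(G)` iff `x` is `W`-column-constant,
and `R_W(G) = E_W(G)` iff `x` is `W`-row-constant. -/
theorem stmt_17 [Nonempty I] [Nonempty J] (hm : 1 ≤ m)
    (x : I → J → EuclideanSpace ℝ (Fin m))
    (w : I → J → ℝ) (hw : IsWeight w)
    (F : EuclideanSpace ℝ (Fin m) → ℝ)
    (hF : ConcaveOn ℝ (convexHull ℝ (entries x)) F) :
    (EW x w F ≤ CW x w F ∧ EW x w F ≤ RW x w F) ∧
    ((WColConst x w → CW x w F = EW x w F) ∧
     (WRowConst x w → RW x w F = EW x w F)) ∧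
    (∀ G : EuclideanSpace ℝ (Fin m) → ℝ,
      StrictConcaveOn ℝ (convexHull ℝ (entries x)) G →
      ((CW x w G = EW x w G ↔ WColConst x w) ∧
       (RW x w G = EW x w G ↔ WRowConst x w))) := by
  obtain ⟨hw0, -⟩ := hw
  have hw0' : ∀ j i, 0 ≤ w i j := fun j i => hw0 i j
  have hent : entries (fun j i => x i j) = entries x := entries_transpose x
  -- column facts
  have colF := col_main x w F hw0
  -- row facts, via transpose
  have rowOf : ∀ G : EuclideanSpace ℝ (Fin m) → ℝ,
      (ConcaveOn ℝ (convexHull ℝ (entries x)) G → EW x w G ≤ RW x w G) ∧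
      (WRowConst x w → RW x w G = EW x w G) ∧
      (StrictConcaveOn ℝ (convexHull ℝ (entries x)) G →
        RW x w G = EW x w G → WRowConst x w) := by
    intro G
    have h := col_main (fun j i => x i j) (fun j i => w i j) G hw0'
    rw [hent, EW_transpose, RW_transpose, WColConst_transpose] at h
    exact h
  refine ⟨⟨colF.1 hF, (rowOf F).1 hF⟩, ⟨colF.2.1, (rowOf F).2.1⟩, fun G hG => ?_⟩
  have colG := col_main x w G hw0
  exact ⟨⟨fun h => colG.2.2 hG h, fun h => colG.2.1 h⟩,
    ⟨fun h => (rowOf G).2.2 hG h, fun h => (rowOf G).2.1 h⟩⟩
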